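/- Li₂(1/9) = 6·Li₂(1/3) + (log 3)² − π²/3. -/

import Mathlib

open Real Set Filter Topology

noncomputable def Li (s : ℕ) (w : ℝ) : ℝ := ∑' n : ℕ, w ^ (n + 1) / ((n:ℝ) + 1) ^ s



lemma u_summable : Summable (fun n : ℕ => 1 / ((n:ℝ) + 1) ^ 2) := by
  have h := (summable_nat_add_iff 1).2 hasSum_zeta_two.summable
  refine h.congr fun n => ?_
  push_cast
  ring

lemma li2_bound {x : ℝ} (hx : |x| ≤ 1) (n : ℕ) :
    ‖x ^ (n + 1) / ((n:ℝ) + 1) ^ 2‖ ≤ 1 / ((n:ℝ) + 1) ^ 2 := by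
  have h1 : (0:ℝ) < ((n:ℝ) + 1) ^ 2 := by positivity
  rw [Real.norm_eq_abs, abs_div, abs_pow, abs_of_pos h1]
  gcongr
  exact pow_le_one₀ (abs_nonneg x) hx

lemma li2_summable {x : ℝ} (hx : |x| ≤ 1) :
    Summable (fun n : ℕ => x ^ (n + 1) / ((n:ℝ) + 1) ^ 2) :=
  Summable.of_norm_bounded u_summable (li2_bound hx)

lemma li2_hasSum {x : ℝ} (hx : |x| ≤ 1) :
    HasSum (fun n : ℕ => x ^ (n + 1) / ((n:ℝ) + 1) ^ 2) (Li 2 x) :=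
  (li2_summable hx).hasSum

lemma li2_zero : Li 2 0 = 0 := by
  simp [Li]

lemma li2_one : Li 2 1 = π ^ 2 / 6 := by
  have h := hasSum_zeta_two.tsum_eq
  rw [Summable.tsum_eq_zero_add hasSum_zeta_two.summable] at h
  norm_num at h
  rw [Li, ← h]
  congr 1 with n
  push_cast
  norm_num

lemma li2_continuousOn : ContinuousOn (Li 2) (Icc (-1:ℝ) 1) := by
  have : ContinuousOn (fun x : ℝ => ∑' n : ℕ, x ^ (n + 1) / ((n:ℝ) + 1) ^ 2)
      (Icc (-1:ℝ) 1) := by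
    refine continuousOn_tsum (fun i => ?_) u_summable (fun n x hx => ?_)
    · exact ((continuous_pow (i+1)).div_const _).continuousOn
    · exact li2_bound (abs_le.2 hx) n
  exact this

lemma li2_dup {x : ℝ} (hx : |x| ≤ 1) : Li 2 (x ^ 2) = 2 * (Li 2 x + Li 2 (-x)) := by
  have hx2 : |x ^ 2| ≤ 1 := by
    rw [abs_pow]; exact pow_le_one₀ (abs_nonneg x) hx
  have hnx : |(-x)| ≤ 1 := by rwa [abs_neg]
  have C := (li2_hasSum hx).add (li2_hasSum hnx)
  set c : ℕ → ℝ := fun n => x ^ (n + 1) / ((n:ℝ) + 1) ^ 2 + (-x) ^ (n + 1) / ((n:ℝ) + 1) ^ 2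
    with hc
  have hinj : Function.Injective (fun k : ℕ => 2 * k + 1) := by
    intro a b h; simp only at h; omega
  have hvanish : ∀ n ∉ Set.range (fun k : ℕ => 2 * k + 1), c n = 0 := by
    intro n hn
    have hev : Even n := by
      rcases Nat.even_or_odd n with h | h
      · exact h
      · exact absurd ⟨h.choose, by simpa using h.choose_spec.symm⟩ hn
      -- Odd n : n = 2k+1
    have hodd : Odd (n + 1) := Even.add_one hev
    simp only [hc, hodd.neg_pow]
    ring
  have C2 : HasSum (fun k : ℕ => c (2 * k + 1)) (Li 2 x + Li 2 (-x)) :=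
    (hinj.hasSum_iff hvanish).2 C
  have heq : (fun k : ℕ => c (2 * k + 1)) =
      fun k : ℕ => (1/2) * ((x ^ 2) ^ (k + 1) / ((k:ℝ) + 1) ^ 2) := by
    funext k
    have h1 : ((2 * k + 1 : ℕ) : ℝ) + 1 = 2 * ((k:ℝ) + 1) := by push_cast; ring
    have h2 : x ^ (2 * k + 1 + 1) = (x ^ 2) ^ (k + 1) := by
      rw [← pow_mul]; ring_nf
    have h3 : (-x) ^ (2 * k + 1 + 1) = (x ^ 2) ^ (k + 1) := by
      rw [show (-x) = -1 * x by ring, mul_pow, ← pow_mul]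
      have : (-1:ℝ) ^ (2 * k + 1 + 1) = 1 := by
        rw [show 2 * k + 1 + 1 = 2 * (k + 1) by ring, pow_mul]; norm_num
      rw [this]; ring_nf
    have hk0 : ((k:ℝ) + 1) ≠ 0 := by positivity
    simp only [hc, h1, h2, h3]
    field_simp
    ring
  rw [heq] at C2
  have C3 : HasSum (fun k : ℕ => (x ^ 2) ^ (k + 1) / ((k:ℝ) + 1) ^ 2)
      (2 * (Li 2 x + Li 2 (-x))) := by
    have := C2.mul_left 2
    simpa [mul_assoc] using this
  exact ((li2_hasSum hx2).unique C3)

lemma li2_hasDerivAt {x : ℝ} (hx : |x| < 1) (hx0 : x ≠ 0) :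
    HasDerivAt (Li 2) (-Real.log (1 - x) / x) x := by
  set r : ℝ := (|x| + 1) / 2 with hr
  have hxr : |x| < r := by rw [hr]; linarith
  have hr1 : r < 1 := by rw [hr]; linarith
  have hr0 : 0 ≤ r := by positivity
  have key : HasDerivAt (fun z : ℝ => ∑' n : ℕ, z ^ (n + 1) / ((n:ℝ) + 1) ^ 2)
      (∑' n : ℕ, x ^ n / ((n:ℝ) + 1)) x := by
    refine hasDerivAt_tsum_of_isPreconnected
      (u := fun n : ℕ => r ^ n)
      (g := fun (n : ℕ) (z : ℝ) => z ^ (n + 1) / ((n:ℝ) + 1) ^ 2)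
      (g' := fun n y => y ^ n / ((n:ℝ) + 1)) (y₀ := 0)
      (summable_geometric_of_lt_one hr0 hr1) isOpen_Ioo (convex_Ioo (-r) r).isPreconnected
      (fun n y _ => ?_) (fun n y hy => ?_) ?_ ?_ ?_
    · have h := (hasDerivAt_pow (n + 1) y).div_const (((n:ℝ) + 1) ^ 2)
      refine h.congr_deriv ?_
      have : ((n:ℝ) + 1) ≠ 0 := by positivity
      push_cast
      field_simp
    · have hy' : |y| ≤ r := by
        rw [abs_le]; exact ⟨hy.1.le, hy.2.le⟩
      have : ‖y ^ n / ((n:ℝ) + 1)‖ = |y| ^ n / ((n:ℝ) + 1) := by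
        rw [Real.norm_eq_abs, abs_div, abs_pow, abs_of_pos (by positivity : (0:ℝ) < (n:ℝ)+1)]
      rw [this]
      have h1 : |y| ^ n ≤ r ^ n := pow_le_pow_left₀ (abs_nonneg y) hy' n
      have h2 : (1:ℝ) ≤ (n:ℝ) + 1 := by simp
      calc |y| ^ n / ((n:ℝ) + 1) ≤ r ^ n / 1 :=
            div_le_div₀ (by positivity) h1 one_pos h2
        _ = r ^ n := by ring
    · exact mem_Ioo.2 ⟨by linarith [abs_nonneg x], by linarith [abs_nonneg x]⟩
    · refine summable_zero.congr fun n => ?_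
      simp
    · exact mem_Ioo.2 ⟨neg_lt_of_abs_lt hxr, lt_of_abs_lt hxr⟩
  have hval : (∑' n : ℕ, x ^ n / ((n:ℝ) + 1)) = -Real.log (1 - x) / x := by
    have h := hasSum_pow_div_log_of_abs_lt_one hx
    have h2 := h.mul_left x⁻¹
    have heq : (fun n : ℕ => x⁻¹ * (x ^ (n + 1) / ((n:ℝ) + 1))) =
        fun n : ℕ => x ^ n / ((n:ℝ) + 1) := by
      funext n
      rw [pow_succ]
      field_simp
    rw [heq] at h2
    rw [h2.tsum_eq]
    field_simp
  rw [hval] at key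
  exact key
lemma landen : ∀ x ∈ Icc (0:ℝ) (1/2),
    Li 2 x + Li 2 (-x / (1 - x)) = -(1/2) * (Real.log (1 - x)) ^ 2 := by
  set G : ℝ → ℝ := fun t => Li 2 t + Li 2 (-t / (1 - t)) + (1/2) * (Real.log (1 - t)) ^ 2
    with hG
  have hG0 : G 0 = 0 := by simp [hG, li2_zero]
  have hGc : ContinuousOn G (Icc (0:ℝ) (1/2)) := by
    have hsub : Icc (0:ℝ) (1/2) ⊆ Icc (-1:ℝ) 1 := by
      intro t ht; exact ⟨by linarith [ht.1], by linarith [ht.2]⟩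
    have c1 : ContinuousOn (fun t : ℝ => Li 2 t) (Icc (0:ℝ) (1/2)) :=
      li2_continuousOn.mono hsub
    have hden : ∀ t ∈ Icc (0:ℝ) (1/2), (1:ℝ) - t ≠ 0 := by
      intro t ht; have := ht.2; intro h; linarith [ht.1]
    have cinner : ContinuousOn (fun t : ℝ => -t / (1 - t)) (Icc (0:ℝ) (1/2)) :=
      (continuousOn_id.neg).div (continuous_const.sub continuous_id).continuousOn hden
    have hmaps : MapsTo (fun t : ℝ => -t / (1 - t)) (Icc (0:ℝ) (1/2)) (Icc (-1:ℝ) 1) := by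
      intro t ht
      have h1 : (0:ℝ) < 1 - t := by linarith [ht.2]
      simp only [Set.mem_Icc]
      constructor
      · rw [neg_div, neg_le]
        have h2 : t / (1 - t) ≤ 1 := by
          rw [div_le_one h1]; linarith [ht.2]
        linarith
      · have : -t / (1 - t) ≤ 0 := div_nonpos_of_nonpos_of_nonneg (by linarith [ht.1]) h1.le
        linarith
    have c2 : ContinuousOn (fun t : ℝ => Li 2 (-t / (1 - t))) (Icc (0:ℝ) (1/2)) :=
      li2_continuousOn.comp cinner hmaps
    have c3 : ContinuousOn (fun t : ℝ => (1/2) * (Real.log (1 - t)) ^ 2) (Icc (0:ℝ) (1/2)) := by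
      apply ContinuousOn.mul continuousOn_const
      exact (((continuous_const.sub continuous_id).continuousOn).log hden).pow 2
    exact (c1.add c2).add c3
  have hGd : ∀ t ∈ Ioo (0:ℝ) (1/2), HasDerivAt G 0 t := by
    intro t ht
    have ht0 : t ≠ 0 := ne_of_gt ht.1
    have h1t : (0:ℝ) < 1 - t := by linarith [ht.2]
    have h1t' : (1:ℝ) - t ≠ 0 := ne_of_gt h1t
    have habs : |t| < 1 := by rw [abs_of_pos ht.1]; linarith [ht.2]
    have h1 : HasDerivAt (Li 2) (-Real.log (1 - t) / t) t := li2_hasDerivAt habs ht0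
    -- inner function
    have hinner : HasDerivAt (fun s : ℝ => -s / (1 - s)) (-1 / (1 - t) ^ 2) t := by
      have hnum : HasDerivAt (fun s : ℝ => -s) (-1) t := (hasDerivAt_id t).neg
      have hden : HasDerivAt (fun s : ℝ => 1 - s) (-1) t := (hasDerivAt_id t).const_sub 1
      have := hnum.div hden h1t'
      refine this.congr_deriv ?_
      field_simp
      ring
    set v : ℝ := -t / (1 - t) with hv
    have hv0 : v ≠ 0 := by
      rw [hv, div_ne_zero_iff]
      exact ⟨neg_ne_zero.2 ht0, h1t'⟩
    have hvabs : |v| < 1 := by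
      rw [hv, abs_div, abs_of_pos h1t, abs_neg, abs_of_pos ht.1, div_lt_one h1t]
      linarith [ht.2]
    have h1v : (1:ℝ) - v = (1 - t)⁻¹ := by
      rw [hv]
      field_simp
      ring
    have h2 : HasDerivAt (fun s : ℝ => Li 2 (-s / (1 - s)))
        ((-Real.log (1 - v) / v) * (-1 / (1 - t) ^ 2)) t :=
      by have := (li2_hasDerivAt hvabs hv0).comp t hinner; exact this
    have hlog : HasDerivAt (fun s : ℝ => Real.log (1 - s)) (-1 / (1 - t)) t := by
      have := ((hasDerivAt_id t).const_sub 1).log h1t'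
      convert this using 1
      all_goals rfl
    have h3 : HasDerivAt (fun s : ℝ => (1/2) * (Real.log (1 - s)) ^ 2)
        ((1/2) * (2 * Real.log (1 - t) ^ 1 * (-1 / (1 - t)))) t := (hlog.pow 2).const_mul (1/2)
    have htot := (h1.add h2).add h3
    have : -Real.log (1 - t) / t + (-Real.log (1 - v) / v) * (-1 / (1 - t) ^ 2)
        + (1/2) * (2 * Real.log (1 - t) ^ 1 * (-1 / (1 - t))) = 0 := by
      rw [h1v, Real.log_inv]
      rw [hv]
      field_simp
      ring
    rw [this] at htot
    exact htot
  intro x hx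
  rcases eq_or_lt_of_le hx.1 with h0 | h0
  · rw [← h0]
    norm_num [li2_zero]
  · obtain ⟨c, _, hc⟩ := exists_hasDerivAt_eq_slope G (fun _ => 0) h0
      (hGc.mono (Icc_subset_Icc le_rfl hx.2))
      (fun t ht => hGd t ⟨ht.1, lt_of_lt_of_le ht.2 hx.2⟩)
    have hGx : G x = 0 := by
      have hx0 : x ≠ 0 := ne_of_gt h0
      rw [hG0] at hc
      field_simp at hc
      rw [hG] at hc ⊢
      linarith [hc]
    rw [hG] at hGx
    linarith [hGx]

theorem Li2_ninth :
    Li 2 (1/9) = 6 * Li 2 (1/3) + (Real.log 3) ^ 2 - Real.pi ^ 2 / 3 := by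
  have h1 : Li 2 1 = π ^ 2 / 6 := li2_one
  have d1 : Li 2 1 = 2 * (Li 2 1 + Li 2 (-1)) := by
    have := li2_dup (x := 1) (by norm_num)
    rwa [one_pow] at this
  have d2 : Li 2 (1/4) = 2 * (Li 2 (1/2) + Li 2 (-(1/2))) := by
    have := li2_dup (x := 1/2) (by rw [abs_of_pos] <;> norm_num)
    rwa [show ((1:ℝ)/2) ^ 2 = 1/4 by norm_num] at this
  have d3 : Li 2 (1/9) = 2 * (Li 2 (1/3) + Li 2 (-(1/3))) := by
    have := li2_dup (x := 1/3) (by rw [abs_of_pos] <;> norm_num)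
    rwa [show ((1:ℝ)/3) ^ 2 = 1/9 by norm_num] at this
  have l1 : Li 2 (1/3) + Li 2 (-(1/2)) = -(1/2) * (Real.log 2 - Real.log 3) ^ 2 := by
    have := landen (1/3) (by constructor <;> norm_num)
    rwa [show -((1:ℝ)/3) / (1 - 1/3) = -(1/2) by norm_num,
      show (1:ℝ) - 1/3 = 2/3 by norm_num,
      Real.log_div (by norm_num) (by norm_num)] at this
  have l2 : Li 2 (1/4) + Li 2 (-(1/3)) = -(1/2) * (Real.log 3 - 2 * Real.log 2) ^ 2 := by
    have := landen (1/4) (by constructor <;> norm_num)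
    have hlog4 : Real.log 4 = 2 * Real.log 2 := by
      rw [show (4:ℝ) = 2 ^ 2 by norm_num, Real.log_pow]
      norm_num
    rwa [show -((1:ℝ)/4) / (1 - 1/4) = -(1/3) by norm_num,
      show (1:ℝ) - 1/4 = 3/4 by norm_num,
      Real.log_div (by norm_num) (by norm_num), hlog4] at this
  have l3 : Li 2 (1/2) + Li 2 (-1) = -(1/2) * (Real.log 2) ^ 2 := by
    have := landen (1/2) (by constructor <;> norm_num)
    rwa [show -((1:ℝ)/2) / (1 - 1/2) = -1 by norm_num,
      show (1:ℝ) - 1/2 = 2⁻¹ by norm_num, Real.log_inv, neg_sq] at this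
  linear_combination d3 + 2*l2 - 2*d2 - 4*l1 - 4*l3 - 2*d1 - 2*h1
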